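/- Let f = (f₁,…,f_m) : ℝⁿ → ℝᵐ be a strongly convex C¹ mapping, where fᵢ has convexity parameter αᵢ > 0. Let Kᵢ be the maximum of |fᵢ(x) - fᵢ(y)| over x, y in the Pareto set X*(f), α₀ = min αᵢ, K₀ = max Kᵢ, and let x*(w) denote the unique minimizer of ∑ᵢ wᵢ fᵢ for w ∈ Δ^{m-1}. Then for any w, w̃ ∈ Δ^{m-1}, ‖x*(w) - x*(w̃)‖ ≤ √((K₀/α₀) ∑ᵢ |wᵢ - w̃ᵢ|). -/

import Mathlib

/-- `f` is strongly convex on `ℝⁿ` with convexity parameter `α`. -/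
def StronglyConvexWith {E : Type*} [NormedAddCommGroup E] [NormedSpace ℝ E]
    (α : ℝ) (f : E → ℝ) : Prop :=
  ∀ x y : E, ∀ t ∈ Set.Icc (0:ℝ) 1,
    f (t • x + (1 - t) • y) ≤ t * f x + (1 - t) * f y - α / 2 * (t * (1 - t) * ‖x - y‖ ^ 2)

/-- The Pareto set of `f : ℝⁿ → ℝᵐ`. -/
def ParetoSet {E : Type*} {m : ℕ} (f : E → EuclideanSpace ℝ (Fin m)) : Set E :=
  {x | ¬ ∃ y, (∀ i, f y i ≤ f x i) ∧ ∃ j, f y j < f x j}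

section Aux

variable {E : Type*} [NormedAddCommGroup E] [NormedSpace ℝ E]

lemma scw_sum {m : ℕ} (f : E → EuclideanSpace ℝ (Fin m)) (α : Fin m → ℝ)
    (hsc : ∀ i, StronglyConvexWith (α i) (fun x => f x i))
    {α₀ : ℝ} (hα₀ : ∀ i, α₀ ≤ α i) {w : Fin m → ℝ}
    (hw : ∀ i, 0 ≤ w i) (hw1 : ∑ i, w i = 1) :
    StronglyConvexWith α₀ (fun x => ∑ i, w i * f x i) := by
  intro x y t ht
  obtain ⟨ht0, ht1⟩ := ht
  set Q := t * (1 - t) * ‖x - y‖ ^ 2 with hQdef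
  have hQ : 0 ≤ Q := by
    rw [hQdef]
    exact mul_nonneg (mul_nonneg ht0 (by linarith)) (sq_nonneg _)
  have h1 : ∑ i, w i * f (t • x + (1 - t) • y) i
      ≤ ∑ i, (w i * (t * f x i + (1 - t) * f y i) - w i * (α i / 2 * Q)) := by
    apply Finset.sum_le_sum
    intro i _
    have h := hsc i x y t ⟨ht0, ht1⟩
    simp only at h
    rw [hQdef]
    nlinarith [mul_le_mul_of_nonneg_left h (hw i)]
  have h2 : ∑ i, w i * (α₀ / 2 * Q) ≤ ∑ i, w i * (α i / 2 * Q) := by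
    apply Finset.sum_le_sum
    intro i _
    have h := hα₀ i
    nlinarith [mul_nonneg (mul_nonneg (hw i) hQ) (sub_nonneg.mpr h)]
  have h3 : ∑ i, w i * (α₀ / 2 * Q) = α₀ / 2 * Q := by
    rw [← Finset.sum_mul, hw1, one_mul]
  have h4 : ∑ i, w i * (t * f x i + (1 - t) * f y i)
      = t * ∑ i, w i * f x i + (1 - t) * ∑ i, w i * f y i := by
    rw [Finset.mul_sum, Finset.mul_sum, ← Finset.sum_add_distrib]
    apply Finset.sum_congr rfl
    intros; ring
  rw [Finset.sum_sub_distrib, h4] at h1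
  linarith

lemma min_gap {α : ℝ} {g : E → ℝ} (hg : StronglyConvexWith α g)
    {x : E} (hx : ∀ y, g x ≤ g y) (y : E) :
    α / 2 * ‖x - y‖ ^ 2 ≤ g y - g x := by
  have key : ∀ t ∈ Set.Ioo (0:ℝ) 1, α / 2 * (t * ‖x - y‖ ^ 2) ≤ g y - g x := by
    intro t ht
    have h1 := hg x y t ⟨ht.1.le, ht.2.le⟩
    have h2 := hx (t • x + (1 - t) • y)
    have h3 : 0 < 1 - t := by linarith [ht.2]
    have h4 : (1 - t) * (α / 2 * (t * ‖x - y‖ ^ 2)) ≤ (1 - t) * (g y - g x) := by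
      nlinarith
    exact (mul_le_mul_iff_right₀ h3).mp h4
  have hT : Filter.Tendsto (fun t : ℝ => α / 2 * (t * ‖x - y‖ ^ 2)) (nhdsWithin 1 (Set.Iio 1))
      (nhds (α / 2 * (1 * ‖x - y‖ ^ 2))) := by
    apply Filter.Tendsto.mono_left _ nhdsWithin_le_nhds
    exact Continuous.tendsto (by continuity) 1
  have hev : ∀ᶠ t in nhdsWithin (1:ℝ) (Set.Iio 1),
      α / 2 * (t * ‖x - y‖ ^ 2) ≤ g y - g x := by
    filter_upwards [Ioo_mem_nhdsLT_of_mem (by norm_num : (1:ℝ) ∈ Set.Ioc (0:ℝ) 1)] with t ht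
    exact key t ht
  have := le_of_tendsto hT hev
  simpa using this

end Aux

theorem xstar_holder_estimate
    (n m : ℕ) (f : EuclideanSpace ℝ (Fin n) → EuclideanSpace ℝ (Fin m))
    (α : Fin m → ℝ) (hα : ∀ i, 0 < α i)
    (hsc : ∀ i, StronglyConvexWith (α i) (fun x => f x i))
    (hf : ContDiff ℝ 1 f)
    (K : Fin m → ℝ)
    (hK : ∀ i, IsGreatest
      {r : ℝ | ∃ x ∈ ParetoSet f, ∃ y ∈ ParetoSet f, r = |f x i - f y i|} (K i))
    (α₀ K₀ : ℝ)
    (hα₀ : IsLeast (Set.range α) α₀) (hK₀ : IsGreatest (Set.range K) K₀)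
    (xstar : (Fin m → ℝ) → EuclideanSpace ℝ (Fin n))
    (hxstar : ∀ w ∈ stdSimplex ℝ (Fin m),
      ∀ y, ∑ i, w i * f (xstar w) i ≤ ∑ i, w i * f y i) :
    ∀ w ∈ stdSimplex ℝ (Fin m), ∀ w' ∈ stdSimplex ℝ (Fin m),
      ‖xstar w - xstar w'‖ ≤ Real.sqrt (K₀ / α₀ * ∑ i, |w i - w' i|) := by
  have hα₀pos : 0 < α₀ := by
    obtain ⟨⟨i, hi⟩, _⟩ := hα₀
    exact hi ▸ hα i
  have hα₀le : ∀ i, α₀ ≤ α i := fun i => hα₀.2 ⟨i, rfl⟩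
  -- each xstar w is in the Pareto set
  have hP : ∀ w ∈ stdSimplex ℝ (Fin m), xstar w ∈ ParetoSet f := by
    intro w hw
    rintro ⟨y, hle, j, hlt⟩
    have hgconv := scw_sum f α hsc hα₀le hw.1 hw.2
    have hmin := hxstar w hw
    have hgy : ∑ i, w i * f y i ≤ ∑ i, w i * f (xstar w) i :=
      Finset.sum_le_sum fun i _ => mul_le_mul_of_nonneg_left (hle i) (hw.1 i)
    have hgap := min_gap hgconv hmin y
    have hD : ‖xstar w - y‖ ^ 2 ≤ 0 := by nlinarith [hxstar w hw y]
    have hxy : xstar w = y := by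
      have : ‖xstar w - y‖ = 0 := by nlinarith [sq_nonneg ‖xstar w - y‖, norm_nonneg (xstar w - y)]
      have := norm_eq_zero.mp this
      exact (sub_eq_zero.mp this)
    rw [← hxy] at hlt
    exact absurd hlt (lt_irrefl _)
  intro w hw w' hw'
  set x := xstar w with hx
  set y := xstar w' with hy
  have hgw := scw_sum f α hsc hα₀le hw.1 hw.2
  have hgw' := scw_sum f α hsc hα₀le hw'.1 hw'.2
  have h1 := min_gap hgw (hxstar w hw) y
  have h2 := min_gap hgw' (hxstar w' hw') x
  have hnorm : ‖y - x‖ = ‖x - y‖ := norm_sub_rev _ _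
  rw [hnorm] at h2
  have hxP := hP w hw
  have hyP := hP w' hw'
  have hbound : ∀ i, |f y i - f x i| ≤ K₀ := by
    intro i
    have h := (hK i).2 ⟨y, hyP, x, hxP, rfl⟩
    exact le_trans h (hK₀.2 ⟨i, rfl⟩)
  have hsumeq : ∑ i, (w i - w' i) * (f y i - f x i)
      = ((∑ i, w i * f y i) - ∑ i, w i * f x i)
        + ((∑ i, w' i * f x i) - ∑ i, w' i * f y i) := by
    rw [← Finset.sum_sub_distrib, ← Finset.sum_sub_distrib, ← Finset.sum_add_distrib]
    apply Finset.sum_congr rfl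
    intros; ring
  have hA : α₀ * ‖x - y‖ ^ 2 ≤ ∑ i, (w i - w' i) * (f y i - f x i) := by
    rw [hsumeq]; linarith
  have hB : ∑ i, (w i - w' i) * (f y i - f x i) ≤ K₀ * ∑ i, |w i - w' i| := by
    rw [Finset.mul_sum]
    apply Finset.sum_le_sum
    intro i _
    calc (w i - w' i) * (f y i - f x i) ≤ |(w i - w' i) * (f y i - f x i)| := le_abs_self _
      _ = |w i - w' i| * |f y i - f x i| := abs_mul _ _
      _ ≤ |w i - w' i| * K₀ := mul_le_mul_of_nonneg_left (hbound i) (abs_nonneg _)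
      _ = K₀ * |w i - w' i| := mul_comm _ _
  have hfinal : ‖x - y‖ ^ 2 ≤ K₀ / α₀ * ∑ i, |w i - w' i| := by
    rw [div_mul_eq_mul_div, le_div_iff₀ hα₀pos]
    nlinarith
  calc ‖x - y‖ = Real.sqrt (‖x - y‖ ^ 2) := (Real.sqrt_sq (norm_nonneg _)).symm
    _ ≤ Real.sqrt (K₀ / α₀ * ∑ i, |w i - w' i|) := Real.sqrt_le_sqrt hfinal
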